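/- Let X be a compact path-connected metric space all of whose open balls are path-connected, let Y be a metric space, and let f : X → Y be a nonconstant continuous function. Let p ∈ X and ε > 0 be such that f⁻¹(S[f(p),ε']) is nonempty for all ε' with 0 < ε' ≤ ε. Then lim_{n→∞} δ(p, ε − 1/n) = δ(p,ε), where δ(p,ε') := dist(p, f⁻¹(S[f(p),ε'])); that is, the increasing sequence δ(p, ε − 1/n) converges to δ(p,ε). -/

import Mathlib

open Metric Set Filter

/-- Left continuity of the delta-epsilon function in `ε`: under the hypotheses
(`X` compact, path-connected, with path-connected open balls, `f` nonconstant
continuous, preimages of the spheres `S[f p, ε']` nonempty for `0 < ε' ≤ ε`), the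
sequence `δ(p, ε - 1/n)` converges to `δ(p, ε)`. -/
theorem delta_epsilon_left_continuous {X Y : Type*} [MetricSpace X] [MetricSpace Y]
    [CompactSpace X] [PathConnectedSpace X]
    (hballs : ∀ (q : X) (r : ℝ), 0 < r → IsPathConnected (Metric.ball q r))
    (f : X → Y) (hf : Continuous f) (hnc : ∃ a b : X, f a ≠ f b)
    (p : X) (ε : ℝ) (hε : 0 < ε)
    (hne : ∀ ε' : ℝ, 0 < ε' → ε' ≤ ε → (f ⁻¹' Metric.sphere (f p) ε').Nonempty) :
    Filter.Tendsto
      (fun n : ℕ => Metric.infDist p (f ⁻¹' Metric.sphere (f p) (ε - 1 / n)))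
      Filter.atTop
      (nhds (Metric.infDist p (f ⁻¹' Metric.sphere (f p) ε))) := by
  set A : ℝ → Set X := fun r => f ⁻¹' Metric.sphere (f p) r with hA
  set δ : ℝ := Metric.infDist p (A ε) with hδ
  have hAclosed : ∀ r, IsClosed (A r) := fun r => (isClosed_sphere).preimage hf
  have hAεne : (A ε).Nonempty := hne ε hε le_rfl
  -- the point x attaining δ(ε)
  obtain ⟨x, hxA, hxd⟩ := ((hAclosed ε).isCompact).exists_infDist_eq_dist hAεne p
  -- upper bound
  have hub : ∀ r : ℝ, 0 ≤ r → r ≤ ε → Metric.infDist p (A r) ≤ δ := by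
    intro r hr0 hrε
    refine le_of_forall_pos_lt_add ?_
    intro η hη
    have hδ0 : (0:ℝ) ≤ δ := Metric.infDist_nonneg
    have hball := hballs p (δ + η) (by linarith)
    have hpos : (0:ℝ) < δ + η := by linarith
    have hpmem : p ∈ Metric.ball p (δ + η) := Metric.mem_ball_self hpos
    have hxmem : x ∈ Metric.ball p (δ + η) := by
      simp [Metric.mem_ball, dist_comm]
      linarith [hxd.symm.le]
    obtain ⟨γ, hγ⟩ := hball.joinedIn p hpmem x hxmem
    have hcont : ContinuousOn (fun t : ℝ => dist (f (γ.extend t)) (f p)) (Set.Icc 0 1) :=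
      ((hf.comp γ.continuous_extend).dist continuous_const).continuousOn
    have h0 : dist (f (γ.extend 0)) (f p) = 0 := by simp
    have h1 : dist (f (γ.extend 1)) (f p) = ε := by
      simp only [Path.extend_one]
      exact hxA
    have := intermediate_value_Icc (by norm_num : (0:ℝ) ≤ 1) hcont
    rw [h0, h1] at this
    obtain ⟨t, ht, htr⟩ := this ⟨hr0, hrε⟩
    have hmem : γ.extend t ∈ A r := by
      simp only [hA, Set.mem_preimage, Metric.mem_sphere]
      exact htr
    calc Metric.infDist p (A r) ≤ dist p (γ.extend t) :=
          Metric.infDist_le_dist_of_mem hmem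
      _ < δ + η := by
          have : γ.extend t ∈ Metric.ball p (δ + η) := by
            rw [γ.extend_apply ht]
            exact hγ _
          rw [dist_comm]; exact Metric.mem_ball.mp this
  -- lower bound: for b < δ, eventually b < δ(ε - 1/n)
  have hlb : ∀ b : ℝ, b < δ → ∀ᶠ n : ℕ in atTop, b < Metric.infDist p (A (ε - 1 / n)) := by
    intro b hb
    rcases lt_or_ge b 0 with hb0 | hb0
    · exact Filter.Eventually.of_forall fun n => lt_of_lt_of_le hb0 Metric.infDist_nonneg
    · set b' : ℝ := (b + δ) / 2 with hb'
      have hbb' : b < b' := by simp [hb']; linarith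
      have hb'δ : b' < δ := by simp [hb']; linarith
      have hb'0 : (0:ℝ) ≤ b' := by linarith
      set K : Set X := Metric.closedBall p b' with hK
      have hKc : IsCompact K := (Metric.isClosed_closedBall).isCompact
      have hKne : K.Nonempty := ⟨p, by simp [hK, hb'0]⟩
      obtain ⟨x₀, hx₀K, hx₀min⟩ := hKc.exists_isMinOn hKne
        (((hf.dist continuous_const).sub continuous_const).abs.continuousOn
          (s := K) : ContinuousOn (fun y => |dist (f y) (f p) - ε|) K)
      rw [isMinOn_iff] at hx₀min
      set m : ℝ := |dist (f x₀) (f p) - ε| with hm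
      have hm0 : 0 < m := by
        rcases (abs_nonneg (dist (f x₀) (f p) - ε)).lt_or_eq with h | h
        · exact h
        · exfalso
          have hdx : dist (f x₀) (f p) = ε := by
            have := abs_eq_zero.mp h.symm; linarith
          have hx₀A : x₀ ∈ A ε := hdx
          have h1 : δ ≤ dist p x₀ := Metric.infDist_le_dist_of_mem hx₀A
          have h2 : dist p x₀ ≤ b' := Metric.mem_closedBall'.mp hx₀K
          linarith
      have hev : ∀ᶠ n : ℕ in atTop, (1:ℝ) / n < min m ε := by
        have := tendsto_one_div_atTop_nhds_zero_nat (𝕜 := ℝ)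
        exact this.eventually_lt_const (by positivity)
      filter_upwards [hev] with n hn
      have hn1 : (1:ℝ)/n < m := lt_of_lt_of_le hn (min_le_left _ _)
      have hn2 : (1:ℝ)/n < ε := lt_of_lt_of_le hn (min_le_right _ _)
      have hn0 : (0:ℝ) ≤ 1/n := by positivity
      have hAne : (A (ε - 1/n)).Nonempty := hne _ (by linarith) (by linarith)
      have : b' ≤ Metric.infDist p (A (ε - 1/n)) := by
        by_contra hcon
        push_neg at hcon
        obtain ⟨y, hy, hyd⟩ := (Metric.infDist_lt_iff hAne).mp hcon
        have hyK : y ∈ K := Metric.mem_closedBall'.mpr hyd.le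
        have habs : |dist (f y) (f p) - ε| = 1/n := by
          have hdy : dist (f y) (f p) = ε - 1/n := hy
          rw [hdy, abs_of_nonpos (by linarith)]
          ring
        have : |dist (f x₀) (f p) - ε| ≤ |dist (f y) (f p) - ε| := hx₀min y hyK
        rw [habs] at this
        linarith
      linarith
  -- conclude
  rw [tendsto_order]
  constructor
  · intro b hb
    exact hlb b hb
  · intro b hb
    have hev : ∀ᶠ n : ℕ in atTop, (1:ℝ)/n ≤ ε := by
      have := tendsto_one_div_atTop_nhds_zero_nat (𝕜 := ℝ)
      exact this.eventually_le_const hε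
    filter_upwards [hev] with n hn
    have hn0 : (0:ℝ) ≤ 1/n := by positivity
    exact lt_of_le_of_lt (hub (ε - 1/n) (by linarith) (by linarith)) hb
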